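/- Consider a PJR-Exact run of an approval-based multi-winner election, fix j with 1 ≤ j ≤ k, and suppose the first j iterations of the run are all normal. Then for each candidate c ∈ C \ W_j with ℓ_j(c) ≥ 1, it holds that Σ_{i : c ∈ A_i and |A_i ∩ W_j| < ℓ_j(c)} ( f^j_i − (ℓ_j(c) − |A_i ∩ W_j| − 1)/ℓ_j(c) ) ≥ q. -/

import Mathlib

open Finset

variable {C : Type*} [Fintype C] [DecidableEq C]

/-- The voters approving candidate `c`. -/
def approvers {n : ℕ} (A : Fin n → Finset C) (c : C) : Finset (Fin n) :=
  Finset.univ.filter (fun i => c ∈ A i)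

/-- The exact quota `q = n / k`. -/
def quota (n k : ℕ) : ℚ := (n : ℚ) / (k : ℚ)

/-- Remaining support of candidate `c` under vote fractions `f`. -/
def supp {n : ℕ} (A : Fin n → Finset C) (f : Fin n → ℚ) (c : C) : ℚ :=
  ∑ i ∈ approvers A c, f i

/-- The set `W_j = {w_1, …, w_j}` of the first `j` winners. -/
def Wset (w : ℕ → C) (j : ℕ) : Finset C := (Finset.Icc 1 j).image w

/-- The candidates approved by every voter in `Ns`, i.e. `⋂_{i ∈ Ns} A i`. -/
def commonApproved {n : ℕ} (A : Fin n → Finset C) (Ns : Finset (Fin n)) : Finset C :=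
  Finset.univ.filter (fun c => ∀ i ∈ Ns, c ∈ A i)

/-- `Ns` is an `ℓ`-cohesive group of voters: `|Ns| ≥ ℓ·n/k` and `|⋂_{i ∈ Ns} A i| ≥ ℓ`. -/
def Cohesive {n : ℕ} (A : Fin n → Finset C) (k ℓ : ℕ) (Ns : Finset (Fin n)) : Prop :=
  (ℓ : ℚ) * (n : ℚ) / (k : ℚ) ≤ (Ns.card : ℚ) ∧ ℓ ≤ (commonApproved A Ns).card

/-- `W` provides proportional justified representation for `(A, k)`. -/
def ProvidesPJR {n : ℕ} (A : Fin n → Finset C) (k : ℕ) (W : Finset C) : Prop :=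
  ∀ ℓ : ℕ, 1 ≤ ℓ → ℓ ≤ k → ∀ Ns : Finset (Fin n), Cohesive A k ℓ Ns →
    ℓ ≤ (W ∩ Ns.biUnion A).card

/-- `W` provides extended justified representation for `(A, k)`. -/
def ProvidesEJR {n : ℕ} (A : Fin n → Finset C) (k : ℕ) (W : Finset C) : Prop :=
  ∀ ℓ : ℕ, 1 ≤ ℓ → ℓ ≤ k → ∀ Ns : Finset (Fin n), Cohesive A k ℓ Ns →
    ∃ i ∈ Ns, ℓ ≤ (A i ∩ W).card

/-- The set of `ℓ`'s satisfying the dissatisfaction-level fixpoint equation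
`ℓ = ⌊(k/n)·|{i : c ∈ A_i ∧ |A_i ∩ W| < ℓ}|⌋`
(natural-number division `k * m / n` is exactly the floor `⌊(k/n)·m⌋`). -/
def dissatSet {n : ℕ} (A : Fin n → Finset C) (k : ℕ) (W : Finset C) (c : C) : Set ℕ :=
  {ℓ : ℕ | ℓ = k * (Finset.univ.filter (fun i => c ∈ A i ∧ (A i ∩ W).card < ℓ)).card / n}

/-- The dissatisfaction level `ℓ(c, W)`: the largest non-negative integer satisfying
the fixpoint equation. -/
noncomputable def dissat {n : ℕ} (A : Fin n → Finset C) (k : ℕ) (W : Finset C) (c : C) : ℕ :=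
  sSup (dissatSet A k W c)

/-- `ℓ_W(i, c) = max_{c' ∈ A_i \ (W ∪ {c})} ℓ(c', W)` (with `max ∅ = 0`). -/
noncomputable def dissatVoter {n : ℕ} (A : Fin n → Finset C) (k : ℕ) (W : Finset C)
    (i : Fin n) (c : C) : ℕ :=
  (A i \ insert c W).sup (dissat A k W)

/-- `ℓ_W(i) = max_{c ∈ A_i \ W} ℓ(c, W)` (with `max ∅ = 0`). -/
noncomputable def dissatVoterAll {n : ℕ} (A : Fin n → Finset C) (k : ℕ) (W : Finset C)
    (i : Fin n) : ℕ :=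
  (A i \ W).sup (dissat A k W)

/-- `g_i(c)` relative to the committee `W`. -/
noncomputable def gfun {n : ℕ} (A : Fin n → Finset C) (k : ℕ) (W : Finset C)
    (i : Fin n) (c : C) : ℚ :=
  if dissatVoter A k W i c ≤ (A i ∩ W).card then 0
  else ((dissatVoter A k W i c : ℚ) - ((A i ∩ W).card : ℚ) - 1) / (dissatVoter A k W i c : ℚ)

/-- Candidate `c ∉ W` is in a normal state (w.r.t. committee `W` and fractions `f`). -/
def NormalState {n : ℕ} (A : Fin n → Finset C) (k : ℕ) (f : Fin n → ℚ) (W : Finset C)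
    (c : C) : Prop :=
  (∀ i : Fin n, c ∈ A i → (A i ∩ W).card < dissatVoter A k W i c →
      ((dissatVoter A k W i c : ℚ) - ((A i ∩ W).card : ℚ)) / (dissatVoter A k W i c : ℚ) ≤ f i) ∧
  quota n k ≤ ∑ i ∈ approvers A c, (f i - gfun A k W i c)

/-- Candidate `c ∉ W` is in a starving state. -/
def StarvingState {n : ℕ} (A : Fin n → Finset C) (k : ℕ) (f : Fin n → ℚ) (W : Finset C)
    (c : C) : Prop :=
  ∃ i : Fin n, c ∈ A i ∧ (A i ∩ W).card < dissatVoter A k W i c ∧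
    f i < ((dissatVoter A k W i c : ℚ) - ((A i ∩ W).card : ℚ)) / (dissatVoter A k W i c : ℚ)

/-- Candidate `c ∉ W` is in an eager state. -/
def EagerState {n : ℕ} (A : Fin n → Finset C) (k : ℕ) (f : Fin n → ℚ) (W : Finset C)
    (c : C) : Prop :=
  ¬ StarvingState A k f W c ∧ quota n k ≤ supp A f c ∧
    ∑ i ∈ approvers A c, (f i - gfun A k W i c) < quota n k

/-- A run of a voting rule in the PJR-Exact family: a sequence of distinct winners
`w 1, …, w k` together with fraction functions `f 0, …, f k` satisfying the three
defining conditions of the family. -/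
structure PJRExactRun (n k : ℕ) (A : Fin n → Finset C) where
  w : ℕ → C
  f : ℕ → Fin n → ℚ
  /-- the selected candidates are pairwise distinct -/
  w_inj : ∀ j j' : ℕ, 1 ≤ j → j ≤ k → 1 ≤ j' → j' ≤ k → w j = w j' → j = j'
  /-- initially each voter has her whole vote -/
  f_zero : ∀ i, f 0 i = 1
  /-- fractions stay non-negative -/
  f_nonneg : ∀ j, 1 ≤ j → j ≤ k → ∀ i, 0 ≤ f j i
  /-- fractions never increase -/
  f_mono : ∀ j, 1 ≤ j → j ≤ k → ∀ i, f j i ≤ f (j - 1) i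
  /-- if the remaining support of the winner exceeds the quota, exactly `q` votes are removed -/
  remove_big : ∀ j, 1 ≤ j → j ≤ k → quota n k < supp A (f (j - 1)) (w j) →
    ∑ i ∈ approvers A (w j), (f (j - 1) i - f j i) = quota n k
  /-- if the remaining support of the winner is at most the quota, all of it is removed -/
  remove_small : ∀ j, 1 ≤ j → j ≤ k → supp A (f (j - 1)) (w j) ≤ quota n k →
    ∀ i, w j ∈ A i → f j i = 0
  /-- voters not approving the winner keep their fractions -/
  f_untouched : ∀ j, 1 ≤ j → j ≤ k → ∀ i, w j ∉ A i → f j i = f (j - 1) i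
  /-- if some unelected candidate has remaining support at least `q`,
  then so has the selected one -/
  greedy : ∀ j, 1 ≤ j → j ≤ k →
    (∃ c, c ∉ Wset w (j - 1) ∧ quota n k ≤ supp A (f (j - 1)) c) →
    quota n k ≤ supp A (f (j - 1)) (w j)

/-- Iteration `j` of a PJR-Exact run is normal. -/
def NormalIteration {n k : ℕ} {A : Fin n → Finset C} (R : PJRExactRun n k A) (j : ℕ) : Prop :=
  NormalState A k (R.f (j - 1)) (Wset R.w (j - 1)) (R.w j) ∧
  ∀ i : Fin n, R.w j ∈ A i →
    (A i ∩ Wset R.w (j - 1)).card < dissatVoter A k (Wset R.w (j - 1)) i (R.w j) →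
    ((dissatVoter A k (Wset R.w (j - 1)) i (R.w j) : ℚ) - ((A i ∩ Wset R.w j).card : ℚ)) /
      (dissatVoter A k (Wset R.w (j - 1)) i (R.w j) : ℚ) ≤ R.f j i

section Aux

/-- Monotonicity of `x ↦ (x - r)/x` for `0 < a ≤ b`, `0 ≤ r`. -/
lemma frac_mono {r a b : ℚ} (hr : 0 ≤ r) (ha : 0 < a) (hab : a ≤ b) :
    (a - r) / a ≤ (b - r) / b := by
  rw [div_le_div_iff₀ ha (lt_of_lt_of_le ha hab)]
  nlinarith

/-- A monotone bounded map on `ℕ` has a fixpoint above any post-fixpoint. -/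
lemma exists_fixpoint (F : ℕ → ℕ) (hmono : Monotone F) (k : ℕ) (hbd : ∀ x, F x ≤ k)
    (ℓ : ℕ) (h : ℓ ≤ F ℓ) : ∃ y, ℓ ≤ y ∧ F y = y := by
  by_cases heq : F ℓ = ℓ
  · exact ⟨ℓ, le_refl _, heq⟩
  · have h1 : ℓ < F ℓ := lt_of_le_of_ne h (Ne.symm heq)
    obtain ⟨y, hy1, hy2⟩ := exists_fixpoint F hmono k hbd (F ℓ) (hmono h)
    exact ⟨y, le_of_lt (lt_of_lt_of_le h1 hy1), hy2⟩
termination_by k + 1 - ℓ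
decreasing_by
  have := hbd ℓ
  omega

variable {n : ℕ}

lemma dissatF_mono (A : Fin n → Finset C) (k : ℕ) (W : Finset C) (c : C) :
    Monotone (fun ℓ =>
      k * (Finset.univ.filter (fun i => c ∈ A i ∧ (A i ∩ W).card < ℓ)).card / n) := by
  intro a b hab
  apply Nat.div_le_div_right
  apply Nat.mul_le_mul_left
  apply Finset.card_le_card
  exact fun x hx => Finset.mem_filter.mpr ⟨(Finset.mem_filter.mp hx).1, (Finset.mem_filter.mp hx).2.1,
    lt_of_lt_of_le (Finset.mem_filter.mp hx).2.2 hab⟩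

lemma dissatF_bdd (A : Fin n → Finset C) (k : ℕ) (W : Finset C) (c : C) (ℓ : ℕ) :
    k * (Finset.univ.filter (fun i => c ∈ A i ∧ (A i ∩ W).card < ℓ)).card / n ≤ k := by
  rcases Nat.eq_zero_or_pos n with hn | hn
  · simp [hn]
  · have hm : (Finset.univ.filter (fun i => c ∈ A i ∧ (A i ∩ W).card < ℓ)).card ≤ n := by
      calc (Finset.univ.filter (fun i => c ∈ A i ∧ (A i ∩ W).card < ℓ)).card
          ≤ (Finset.univ : Finset (Fin n)).card := Finset.card_filter_le _ _
        _ = n := by simp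
    calc k * (Finset.univ.filter (fun i => c ∈ A i ∧ (A i ∩ W).card < ℓ)).card / n
        ≤ k * n / n := Nat.div_le_div_right (Nat.mul_le_mul_left _ hm)
      _ = k := Nat.mul_div_cancel k hn

lemma dissatSet_bddAbove (A : Fin n → Finset C) (k : ℕ) (W : Finset C) (c : C) :
    BddAbove (dissatSet A k W c) := by
  refine ⟨k, fun ℓ hℓ => ?_⟩
  rw [dissatSet, Set.mem_setOf_eq] at hℓ
  rw [hℓ]
  exact dissatF_bdd A k W c ℓ

lemma zero_mem_dissatSet (A : Fin n → Finset C) (k : ℕ) (W : Finset C) (c : C) :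
    0 ∈ dissatSet A k W c := by
  simp [dissatSet]

/-- The dissatisfaction level satisfies the fixed-point equation. -/
lemma dissat_mem (A : Fin n → Finset C) (k : ℕ) (W : Finset C) (c : C) :
    dissat A k W c ∈ dissatSet A k W c :=
  Nat.sSup_mem ⟨0, zero_mem_dissatSet A k W c⟩ (dissatSet_bddAbove A k W c)

/-- Any post-fixpoint is at most the dissatisfaction level. -/
lemma le_dissat_of_postfix (A : Fin n → Finset C) (k : ℕ) (W : Finset C) (c : C) (ℓ : ℕ)
    (h : ℓ ≤ k * (Finset.univ.filter (fun i => c ∈ A i ∧ (A i ∩ W).card < ℓ)).card / n) :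
    ℓ ≤ dissat A k W c := by
  obtain ⟨y, hy1, hy2⟩ := exists_fixpoint _ (dissatF_mono A k W c) k
    (dissatF_bdd A k W c) ℓ h
  have hy : y ∈ dissatSet A k W c := hy2.symm
  exact le_trans hy1 (le_csSup (dissatSet_bddAbove A k W c) hy)

/-- `dissat` is antitone in the committee. -/
lemma dissat_antitone (A : Fin n → Finset C) (k : ℕ) {W W' : Finset C} (hWW : W ⊆ W')
    (c : C) : dissat A k W' c ≤ dissat A k W c := by
  have hmem := dissat_mem A k W' c
  rw [dissatSet, Set.mem_setOf_eq] at hmem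
  apply le_dissat_of_postfix
  calc dissat A k W' c
      = k * (Finset.univ.filter
          (fun i => c ∈ A i ∧ (A i ∩ W').card < dissat A k W' c)).card / n := hmem
    _ ≤ k * (Finset.univ.filter
          (fun i => c ∈ A i ∧ (A i ∩ W).card < dissat A k W' c)).card / n := by
        apply Nat.div_le_div_right
        apply Nat.mul_le_mul_left
        apply Finset.card_le_card
        refine fun x hx => Finset.mem_filter.mpr ⟨(Finset.mem_filter.mp hx).1, (Finset.mem_filter.mp hx).2.1,
          lt_of_le_of_lt ?_ (Finset.mem_filter.mp hx).2.2⟩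
        exact Finset.card_le_card (Finset.inter_subset_inter (Finset.Subset.refl _) hWW)

lemma Wset_zero (w : ℕ → C) : Wset w 0 = ∅ := by
  simp [Wset]

lemma Wset_succ (w : ℕ → C) (j : ℕ) : Wset w (j + 1) = insert (w (j + 1)) (Wset w j) := by
  unfold Wset
  rw [show Finset.Icc 1 (j + 1) = insert (j + 1) (Finset.Icc 1 j) from by
    ext x; simp only [Finset.mem_Icc, Finset.mem_insert]; omega]
  rw [Finset.image_insert]

/-- The key invariant maintained by normal iterations: every voter whose maximal
remaining dissatisfaction level exceeds her current representation keeps at least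
the corresponding fraction of her vote. -/
lemma invariant_frac {n k : ℕ} {A : Fin n → Finset C} (R : PJRExactRun n k A)
    (j : ℕ) (hjk : j ≤ k)
    (hnormal : ∀ j' : ℕ, 1 ≤ j' → j' ≤ j → NormalIteration R j') :
    ∀ i : Fin n, (A i ∩ Wset R.w j).card < dissatVoterAll A k (Wset R.w j) i →
      ((dissatVoterAll A k (Wset R.w j) i : ℚ) - ((A i ∩ Wset R.w j).card : ℚ)) /
        (dissatVoterAll A k (Wset R.w j) i : ℚ) ≤ R.f j i := by
  induction j with
  | zero =>
    intro i hi
    rw [Wset_zero] at hi ⊢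
    rw [R.f_zero i]
    have hL : 0 < dissatVoterAll A k (∅ : Finset C) i := by
      simpa using lt_of_le_of_lt (Nat.zero_le _) hi
    have hLQ : (0 : ℚ) < (dissatVoterAll A k (∅ : Finset C) i : ℚ) := by
      exact_mod_cast hL
    have hcard : ((A i ∩ (∅ : Finset C)).card : ℚ) = 0 := by simp
    rw [hcard, sub_zero, div_self (ne_of_gt hLQ)]
  | succ j IH =>
    intro i hi
    have hjk' : j ≤ k := le_trans (Nat.le_succ j) hjk
    have hnormal' : ∀ j' : ℕ, 1 ≤ j' → j' ≤ j → NormalIteration R j' :=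
      fun j' h1 h2 => hnormal j' h1 (le_trans h2 (Nat.le_succ j))
    set W := Wset R.w j with hW
    set W' := Wset R.w (j + 1) with hW'
    have hWins : W' = insert (R.w (j + 1)) W := Wset_succ R.w j
    have hWW : W ⊆ W' := by rw [hWins]; exact Finset.subset_insert _ _
    set L' := dissatVoterAll A k W' i with hL'
    set r' := (A i ∩ W').card with hr'
    have hL'pos : 0 < L' := lt_of_le_of_lt (Nat.zero_le _) hi
    have hL'Q : (0 : ℚ) < (L' : ℚ) := by exact_mod_cast hL'pos
    by_cases hwi : R.w (j + 1) ∈ A i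
    · -- the winner of iteration j+1 is approved by i: use normality of iteration j+1
      have hN := (hnormal (j + 1) (Nat.le_add_left 1 j) (le_refl _)).2 i hwi
      have hsimp : j + 1 - 1 = j := rfl
      rw [hsimp] at hN
      set Lv := dissatVoter A k W i (R.w (j + 1)) with hLv
      -- L' ≤ Lv
      have hLLv : L' ≤ Lv := by
        rw [hL', dissatVoterAll, hLv, dissatVoter]
        have hset : A i \ W' = A i \ insert (R.w (j + 1)) W := by rw [hWins]
        rw [hset]
        apply Finset.sup_mono_fun
        intro c' _
        exact dissat_antitone A k hWW c'
      have hrW : (A i ∩ W).card ≤ r' :=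
        Finset.card_le_card (Finset.inter_subset_inter (Finset.Subset.refl _) hWW)
      have hcond : (A i ∩ W).card < Lv := lt_of_lt_of_le (lt_of_le_of_lt hrW hi) hLLv
      have hbound := hN hcond
      have hLvQ : (0 : ℚ) < (Lv : ℚ) := by
        exact_mod_cast lt_of_lt_of_le hL'pos hLLv
      refine le_trans ?_ hbound
      apply frac_mono
      · exact_mod_cast Nat.zero_le r'
      · exact hL'Q
      · exact_mod_cast hLLv
    · -- the winner of iteration j+1 is not approved by i: fractions and
      -- representation unchanged, dissatisfaction only decreases
      have hf : R.f (j + 1) i = R.f j i := by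
        have := R.f_untouched (j + 1) (Nat.le_add_left 1 j) hjk i hwi
        simpa using this
      have hinter : A i ∩ W' = A i ∩ W := by
        rw [hWins, Finset.inter_insert_of_notMem hwi]
      set L := dissatVoterAll A k W i with hLdef
      have hLL : L' ≤ L := by
        rw [hL', dissatVoterAll]
        apply Finset.sup_le
        intro c' hc'
        have hc'W : c' ∈ A i \ W := by
          rw [Finset.mem_sdiff] at hc' ⊢
          exact ⟨hc'.1, fun h => hc'.2 (hWW h)⟩
        calc dissat A k W' c' ≤ dissat A k W c' := dissat_antitone A k hWW c'
          _ ≤ L := Finset.le_sup hc'W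
      have hiW : (A i ∩ W).card < L := by
        rw [← hinter]
        exact lt_of_lt_of_le hi hLL
      have hIH := IH hjk' hnormal' i hiW
      rw [hf, hr', hinter]
      refine le_trans ?_ hIH
      apply frac_mono
      · exact_mod_cast Nat.zero_le (A i ∩ W).card
      · exact hL'Q
      · exact_mod_cast hLL

end Aux

/-- Lemma 3 of the paper: after `j` normal iterations, every unelected
candidate `c` with `ℓ_j(c) ≥ 1` satisfies
`Σ_{i : c ∈ A_i, |A_i ∩ W_j| < ℓ_j(c)} (f^j_i − (ℓ_j(c) − |A_i ∩ W_j| − 1)/ℓ_j(c)) ≥ q`. -/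
theorem normal_iterations_support_bound {C : Type*} [Fintype C] [DecidableEq C] {n k : ℕ}
    (hn : 0 < n) (hk : 1 ≤ k) (hkC : k ≤ Fintype.card C)
    (A : Fin n → Finset C) (R : PJRExactRun n k A)
    (j : ℕ) (hj1 : 1 ≤ j) (hjk : j ≤ k)
    (hnormal : ∀ j' : ℕ, 1 ≤ j' → j' ≤ j → NormalIteration R j') :
    ∀ c : C, c ∉ Wset R.w j → 1 ≤ dissat A k (Wset R.w j) c →
      quota n k ≤
        ∑ i ∈ (approvers A c).filter
            (fun i => (A i ∩ Wset R.w j).card < dissat A k (Wset R.w j) c),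
          (R.f j i -
            ((dissat A k (Wset R.w j) c : ℚ) - ((A i ∩ Wset R.w j).card : ℚ) - 1) /
              (dissat A k (Wset R.w j) c : ℚ)) := by
  intro c hc hℓ1
  set W := Wset R.w j with hW
  set ℓ := dissat A k W c with hℓdef
  set S := (approvers A c).filter (fun i => (A i ∩ W).card < ℓ) with hS
  have hℓQ : (0 : ℚ) < (ℓ : ℚ) := by exact_mod_cast hℓ1
  have hkQ : (0 : ℚ) < (k : ℚ) := by exact_mod_cast hk
  -- the fixpoint equation: ℓ = k * |S| / n
  have hSeq : S = Finset.univ.filter (fun i => c ∈ A i ∧ (A i ∩ W).card < ℓ) := by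
    rw [hS, approvers, Finset.filter_filter]
  have hmem := dissat_mem A k W c
  rw [dissatSet, Set.mem_setOf_eq] at hmem
  have hfix : ℓ = k * S.card / n := by rw [hSeq]; exact hmem
  have hmn : ℓ * n ≤ k * S.card := by
    have : ℓ ≤ k * S.card / n := le_of_eq hfix
    exact (Nat.le_div_iff_mul_le hn).mp this
  -- quota ≤ |S| / ℓ
  have hq : quota n k ≤ (S.card : ℚ) / (ℓ : ℚ) := by
    rw [quota, div_le_div_iff₀ hkQ hℓQ]
    have : ((ℓ * n : ℕ) : ℚ) ≤ ((k * S.card : ℕ) : ℚ) := by exact_mod_cast hmn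
    push_cast at this
    linarith
  -- each term of the sum is at least 1/ℓ
  have hterm : ∀ i ∈ S, 1 / (ℓ : ℚ) ≤
      R.f j i - ((ℓ : ℚ) - ((A i ∩ W).card : ℚ) - 1) / (ℓ : ℚ) := by
    intro i hiS
    rw [hS, Finset.mem_filter] at hiS
    obtain ⟨hiA, hir⟩ := hiS
    have hcAi : c ∈ A i := by
      rw [approvers, Finset.mem_filter] at hiA
      exact hiA.2
    set r := (A i ∩ W).card with hr
    set L := dissatVoterAll A k W i with hL
    have hcAW : c ∈ A i \ W := Finset.mem_sdiff.mpr ⟨hcAi, hc⟩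
    have hℓL : ℓ ≤ L := by
      rw [hℓdef, hL, dissatVoterAll]
      exact Finset.le_sup hcAW
    have hrL : r < L := lt_of_lt_of_le hir hℓL
    have hinv := invariant_frac R j hjk hnormal i hrL
    have hLQ : (0 : ℚ) < (L : ℚ) := by
      exact_mod_cast lt_of_lt_of_le hℓ1 hℓL
    have hmono : ((ℓ : ℚ) - (r : ℚ)) / (ℓ : ℚ) ≤ ((L : ℚ) - (r : ℚ)) / (L : ℚ) := by
      apply frac_mono
      · exact_mod_cast Nat.zero_le r
      · exact hℓQ
      · exact_mod_cast hℓL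
    have hfi : ((ℓ : ℚ) - (r : ℚ)) / (ℓ : ℚ) ≤ R.f j i := le_trans hmono hinv
    have harith : ((ℓ : ℚ) - (r : ℚ)) / (ℓ : ℚ) -
        ((ℓ : ℚ) - (r : ℚ) - 1) / (ℓ : ℚ) = 1 / (ℓ : ℚ) := by
      rw [div_sub_div_same]
      ring_nf
    linarith
  -- sum up
  have hsum : (S.card : ℚ) * (1 / (ℓ : ℚ)) ≤
      ∑ i ∈ S, (R.f j i - ((ℓ : ℚ) - ((A i ∩ W).card : ℚ) - 1) / (ℓ : ℚ)) := by
    have := Finset.card_nsmul_le_sum S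
      (fun i => R.f j i - ((ℓ : ℚ) - ((A i ∩ W).card : ℚ) - 1) / (ℓ : ℚ))
      (1 / (ℓ : ℚ)) hterm
    simpa [nsmul_eq_mul] using this
  calc quota n k ≤ (S.card : ℚ) / (ℓ : ℚ) := hq
    _ = (S.card : ℚ) * (1 / (ℓ : ℚ)) := by ring
    _ ≤ _ := hsum
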